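/- Let ε₀, μ₀, τ₀, σ₀ > 0 and let (E, H, J, K) solve the abstract weak graphene system on [0, T_fin]. Then for every t ∈ [0, T_fin] one has the combined identity (1/2)·d/dt[ 2τ₀ε₀‖E'(t)‖²_X + σ₀‖T E(t)‖²_Z + μ₀‖τ₀^{1/2} H'(t) + τ₀^{−1/2} H(t)‖²_Y + (μ₀/τ₀)‖H(t)‖²_Y + (2ε₀/τ₀)‖E(t)‖²_X + (2/σ₀)‖J(t)‖²_Z + τ₀μ₀‖H'(t)‖²_Y + (τ₀²/σ₀)‖J'(t)‖²_Z ] + ε₀‖E'(t)‖²_X + (2/(τ₀σ₀))‖J(t)‖²_Z + (τ₀/σ₀)‖J'(t)‖²_Z = μ₀‖H'(t)‖²_Y − ⟨H(t), K'(t)⟩_Y − 2τ₀⟨H'(t), K'(t)⟩_Y − (2/τ₀)⟨K(t), H(t)⟩_Y. -/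

import Mathlib

open scoped RealInnerProductSpace

lemma hasDerivAt_unique_on_Icc {V : Type*} [NormedAddCommGroup V] [NormedSpace ℝ V]
    {f g : ℝ → V} {f' g' : V} {a b t : ℝ} (hab : a < b) (ht : t ∈ Set.Icc a b)
    (hf : HasDerivAt f f' t) (hg : HasDerivAt g g' t)
    (heq : ∀ s ∈ Set.Icc a b, f s = g s) : f' = g' :=
  ((uniqueDiffOn_Icc hab) t ht).eq_deriv _ hf.hasDerivWithinAt
    ((hg.hasDerivWithinAt).congr heq (heq t ht))

lemma hasDerivAt_inner_self {V : Type*} [NormedAddCommGroup V] [InnerProductSpace ℝ V]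
    {f : ℝ → V} {f' : V} {x : ℝ} (hf : HasDerivAt f f' x) :
    HasDerivAt (fun t => ⟪f t, f t⟫) (2 * ⟪f', f x⟫) x := by
  have h := hf.inner ℝ hf
  refine h.congr_deriv ?_
  rw [two_mul, real_inner_comm]

set_option maxHeartbeats 1000000 in
/-- The combined identity (2.26) of the stability proof. -/
theorem graphene_combined_identity
    {X Y Z : Type*}
    [NormedAddCommGroup X] [InnerProductSpace ℝ X]
    [NormedAddCommGroup Y] [InnerProductSpace ℝ Y]
    [NormedAddCommGroup Z] [InnerProductSpace ℝ Z]
    (B : X →L[ℝ] Y) (T : X →L[ℝ] Z)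
    (ε₀ μ₀ τ₀ σ₀ Tfin : ℝ)
    (hε₀ : 0 < ε₀) (hμ₀ : 0 < μ₀) (hτ₀ : 0 < τ₀) (hσ₀ : 0 < σ₀) (hTfin : 0 < Tfin)
    (E : ℝ → X) (H : ℝ → Y) (J : ℝ → Z) (K : ℝ → Y)
    (hE : ContDiff ℝ 2 E) (hH : ContDiff ℝ 2 H) (hJ : ContDiff ℝ 2 J)
    (hK : ContDiff ℝ 1 K)
    (heq1 : ∀ t ∈ Set.Icc (0:ℝ) Tfin, ∀ φ : X,
      ε₀ * ⟪deriv E t, φ⟫ = ⟪H t, B φ⟫ - ⟪J t, T φ⟫)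
    (heq2 : ∀ t ∈ Set.Icc (0:ℝ) Tfin, μ₀ • deriv H t = -(B (E t)) - K t)
    (heq3 : ∀ t ∈ Set.Icc (0:ℝ) Tfin, τ₀ • deriv J t + J t = σ₀ • T (E t)) :
    ∀ t ∈ Set.Icc (0:ℝ) Tfin,
      (1/2) * deriv (fun s => 2 * τ₀ * ε₀ * ‖deriv E s‖^2 + σ₀ * ‖T (E s)‖^2
          + μ₀ * ‖Real.sqrt τ₀ • deriv H s + (Real.sqrt τ₀)⁻¹ • H s‖^2
          + (μ₀/τ₀) * ‖H s‖^2 + (2 * ε₀/τ₀) * ‖E s‖^2 + (2/σ₀) * ‖J s‖^2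
          + τ₀ * μ₀ * ‖deriv H s‖^2 + (τ₀^2/σ₀) * ‖deriv J s‖^2) t
        + ε₀ * ‖deriv E t‖^2 + (2/(τ₀ * σ₀)) * ‖J t‖^2 + (τ₀/σ₀) * ‖deriv J t‖^2
      = μ₀ * ‖deriv H t‖^2 - ⟪H t, deriv K t⟫ - 2 * τ₀ * ⟪deriv H t, deriv K t⟫
          - (2/τ₀) * ⟪K t, H t⟫ := by
  intro t ht
  -- differentiability
  have hE2 : ContDiff ℝ (1+1) E := by norm_num; exact hE
  have hH2 : ContDiff ℝ (1+1) H := by norm_num; exact hH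
  have hJ2 : ContDiff ℝ (1+1) J := by norm_num; exact hJ
  have hEdiff : Differentiable ℝ E := hE.differentiable two_ne_zero
  have hHdiff : Differentiable ℝ H := hH.differentiable two_ne_zero
  have hJdiff : Differentiable ℝ J := hJ.differentiable two_ne_zero
  have hKdiff : Differentiable ℝ K := hK.differentiable one_ne_zero
  have hEdiff' : Differentiable ℝ (deriv E) :=
    ((contDiff_succ_iff_deriv.mp hE2).2.2).differentiable one_ne_zero
  have hHdiff' : Differentiable ℝ (deriv H) :=
    ((contDiff_succ_iff_deriv.mp hH2).2.2).differentiable one_ne_zero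
  have hJdiff' : Differentiable ℝ (deriv J) :=
    ((contDiff_succ_iff_deriv.mp hJ2).2.2).differentiable one_ne_zero
  have hEd : ∀ s : ℝ, HasDerivAt E (deriv E s) s := fun s => (hEdiff s).hasDerivAt
  have hHd : ∀ s : ℝ, HasDerivAt H (deriv H s) s := fun s => (hHdiff s).hasDerivAt
  have hJd : ∀ s : ℝ, HasDerivAt J (deriv J s) s := fun s => (hJdiff s).hasDerivAt
  have hKd : ∀ s : ℝ, HasDerivAt K (deriv K s) s := fun s => (hKdiff s).hasDerivAt
  have hEd2 : ∀ s : ℝ, HasDerivAt (deriv E) (deriv (deriv E) s) s :=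
    fun s => (hEdiff' s).hasDerivAt
  have hHd2 : ∀ s : ℝ, HasDerivAt (deriv H) (deriv (deriv H) s) s :=
    fun s => (hHdiff' s).hasDerivAt
  have hJd2 : ∀ s : ℝ, HasDerivAt (deriv J) (deriv (deriv J) s) s :=
    fun s => (hJdiff' s).hasDerivAt
  have hTEd : ∀ s : ℝ, HasDerivAt (fun u => T (E u)) (T (deriv E s)) s :=
    fun s => (T.hasFDerivAt.comp_hasDerivAt s (hEd s))
  have hBEd : ∀ s : ℝ, HasDerivAt (fun u => B (E u)) (B (deriv E s)) s :=
    fun s => (B.hasFDerivAt.comp_hasDerivAt s (hEd s))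
  -- derived vector equations
  have hii' : μ₀ • deriv (deriv H) t = -(B (deriv E t)) - deriv K t := by
    refine hasDerivAt_unique_on_Icc hTfin ht ((hHd2 t).const_smul μ₀)
      (((hBEd t).neg).sub (hKd t)) heq2
  have hiii' : τ₀ • deriv (deriv J) t + deriv J t = σ₀ • T (deriv E t) := by
    refine hasDerivAt_unique_on_Icc hTfin ht (((hJd2 t).const_smul τ₀).add (hJd t))
      ((hTEd t).const_smul σ₀) heq3
  -- derived weak equation (i') with φ = deriv E t
  have hi' : ε₀ * ⟪deriv (deriv E) t, deriv E t⟫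
      = ⟪deriv H t, B (deriv E t)⟫ - ⟪deriv J t, T (deriv E t)⟫ := by
    have h := hasDerivAt_unique_on_Icc hTfin ht
      (((hEd2 t).inner ℝ (hasDerivAt_const t (deriv E t))).const_mul ε₀)
      (((hHd t).inner ℝ (hasDerivAt_const t (B (deriv E t)))).sub
        ((hJd t).inner ℝ (hasDerivAt_const t (T (deriv E t)))))
      (fun s hs => heq1 s hs (deriv E t))
    simpa using h
  -- scalar identities (canonical orientations)
  have h1 : ε₀ * ⟪deriv E t, E t⟫ = ⟪H t, B (E t)⟫ - ⟪J t, T (E t)⟫ := heq1 t ht (E t)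
  have h2 : ε₀ * ⟪deriv E t, deriv E t⟫
      = ⟪H t, B (deriv E t)⟫ - ⟪J t, T (deriv E t)⟫ := heq1 t ht (deriv E t)
  have h3 := hi'
  have h4 : μ₀ * ⟪deriv H t, H t⟫ = -⟪H t, B (E t)⟫ - ⟪K t, H t⟫ := by
    have h := congrArg (fun v => ⟪v, H t⟫) (heq2 t ht)
    simpa [inner_sub_left, inner_neg_left, real_inner_smul_left,
      real_inner_comm (B (E t)) (H t)] using h
  have h5 : μ₀ * ⟪deriv (deriv H) t, deriv H t⟫
      = -⟪deriv H t, B (deriv E t)⟫ - ⟪deriv H t, deriv K t⟫ := by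
    have h := congrArg (fun v => ⟪v, deriv H t⟫) hii'
    simpa [inner_sub_left, inner_neg_left, real_inner_smul_left,
      real_inner_comm (B (deriv E t)) (deriv H t),
      real_inner_comm (deriv K t) (deriv H t)] using h
  have h6 : μ₀ * ⟪deriv (deriv H) t, H t⟫
      = -⟪H t, B (deriv E t)⟫ - ⟪H t, deriv K t⟫ := by
    have h := congrArg (fun v => ⟪v, H t⟫) hii'
    simpa [inner_sub_left, inner_neg_left, real_inner_smul_left,
      real_inner_comm (B (deriv E t)) (H t),
      real_inner_comm (deriv K t) (H t)] using h
  have h7 : τ₀ * ⟪deriv J t, J t⟫ + ⟪J t, J t⟫ = σ₀ * ⟪J t, T (E t)⟫ := by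
    have h := congrArg (fun v => ⟪v, J t⟫) (heq3 t ht)
    simpa [inner_add_left, real_inner_smul_left,
      real_inner_comm (T (E t)) (J t)] using h
  have h8 : σ₀ * ⟪T (deriv E t), T (E t)⟫
      = τ₀ * ⟪deriv J t, T (deriv E t)⟫ + ⟪J t, T (deriv E t)⟫ := by
    have h := congrArg (fun v => ⟪T (deriv E t), v⟫) (heq3 t ht)
    simpa [inner_add_right, real_inner_smul_right,
      real_inner_comm (T (deriv E t)) (deriv J t),
      real_inner_comm (T (deriv E t)) (J t)] using h.symm
  have h9 : τ₀ * ⟪deriv (deriv J) t, deriv J t⟫ + ⟪deriv J t, deriv J t⟫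
      = σ₀ * ⟪deriv J t, T (deriv E t)⟫ := by
    have h := congrArg (fun v => ⟪v, deriv J t⟫) hiii'
    simpa [inner_add_left, real_inner_smul_left,
      real_inner_comm (T (deriv E t)) (deriv J t)] using h
  have h7' : (2/σ₀) * ⟪deriv J t, J t⟫ + (2/(τ₀*σ₀)) * ⟪J t, J t⟫
      = (2/τ₀) * ⟪J t, T (E t)⟫ := by
    field_simp
    linear_combination h7
  have h9' : (τ₀^2/σ₀) * ⟪deriv (deriv J) t, deriv J t⟫
        + (τ₀/σ₀) * ⟪deriv J t, deriv J t⟫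
      = τ₀ * ⟪deriv J t, T (deriv E t)⟫ := by
    field_simp
    linear_combination h9
  -- the derivative of the energy
  have hGd : HasDerivAt (fun s => Real.sqrt τ₀ • deriv H s + (Real.sqrt τ₀)⁻¹ • H s)
      (Real.sqrt τ₀ • deriv (deriv H) t + (Real.sqrt τ₀)⁻¹ • deriv H t) t :=
    ((hHd2 t).const_smul _).add ((hHd t).const_smul _)
  have hsq : Real.sqrt τ₀ * Real.sqrt τ₀ = τ₀ := Real.mul_self_sqrt hτ₀.le
  have hsne : Real.sqrt τ₀ ≠ 0 := by positivity
  have hGexp : ⟪Real.sqrt τ₀ • deriv (deriv H) t + (Real.sqrt τ₀)⁻¹ • deriv H t,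
        Real.sqrt τ₀ • deriv H t + (Real.sqrt τ₀)⁻¹ • H t⟫
      = τ₀ * ⟪deriv (deriv H) t, deriv H t⟫ + ⟪deriv (deriv H) t, H t⟫
        + ⟪deriv H t, deriv H t⟫ + τ₀⁻¹ * ⟪deriv H t, H t⟫ := by
    have hinv1 : (Real.sqrt τ₀)⁻¹ * Real.sqrt τ₀ = 1 := inv_mul_cancel₀ hsne
    have hinv2 : Real.sqrt τ₀ * (Real.sqrt τ₀)⁻¹ = 1 := mul_inv_cancel₀ hsne
    have hinv3 : (Real.sqrt τ₀)⁻¹ * (Real.sqrt τ₀)⁻¹ = τ₀⁻¹ := by rw [← mul_inv, hsq]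
    simp only [inner_add_left, inner_add_right, real_inner_smul_left, real_inner_smul_right]
    linear_combination ⟪deriv (deriv H) t, deriv H t⟫ * hsq
      + ⟪deriv (deriv H) t, H t⟫ * hinv2 + ⟪deriv H t, deriv H t⟫ * hinv1
      + ⟪deriv H t, H t⟫ * hinv3
  have hF : HasDerivAt (fun s => 2 * τ₀ * ε₀ * ⟪deriv E s, deriv E s⟫
        + σ₀ * ⟪T (E s), T (E s)⟫
        + μ₀ * ⟪Real.sqrt τ₀ • deriv H s + (Real.sqrt τ₀)⁻¹ • H s,
            Real.sqrt τ₀ • deriv H s + (Real.sqrt τ₀)⁻¹ • H s⟫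
        + (μ₀/τ₀) * ⟪H s, H s⟫ + (2 * ε₀/τ₀) * ⟪E s, E s⟫ + (2/σ₀) * ⟪J s, J s⟫
        + τ₀ * μ₀ * ⟪deriv H s, deriv H s⟫ + (τ₀^2/σ₀) * ⟪deriv J s, deriv J s⟫)
      (2 * τ₀ * ε₀ * (2 * ⟪deriv (deriv E) t, deriv E t⟫)
        + σ₀ * (2 * ⟪T (deriv E t), T (E t)⟫)
        + μ₀ * (2 * ⟪Real.sqrt τ₀ • deriv (deriv H) t + (Real.sqrt τ₀)⁻¹ • deriv H t,
            Real.sqrt τ₀ • deriv H t + (Real.sqrt τ₀)⁻¹ • H t⟫)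
        + (μ₀/τ₀) * (2 * ⟪deriv H t, H t⟫) + (2 * ε₀/τ₀) * (2 * ⟪deriv E t, E t⟫)
        + (2/σ₀) * (2 * ⟪deriv J t, J t⟫)
        + τ₀ * μ₀ * (2 * ⟪deriv (deriv H) t, deriv H t⟫)
        + (τ₀^2/σ₀) * (2 * ⟪deriv (deriv J) t, deriv J t⟫)) t := by
    exact (((((((((hasDerivAt_inner_self (hEd2 t)).const_mul _).add
      ((hasDerivAt_inner_self (hTEd t)).const_mul _)).add
      ((hasDerivAt_inner_self hGd).const_mul _)).add
      ((hasDerivAt_inner_self (hHd t)).const_mul _)).add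
      ((hasDerivAt_inner_self (hEd t)).const_mul _)).add
      ((hasDerivAt_inner_self (hJd t)).const_mul _)).add
      ((hasDerivAt_inner_self (hHd2 t)).const_mul _)).add
      ((hasDerivAt_inner_self (hJd2 t)).const_mul _))
  have hD := hF.deriv
  rw [hGexp] at hD
  simp only [← real_inner_self_eq_norm_sq]
  rw [hD]
  linear_combination 2*τ₀*h3 + h2 + 2*τ₀*h5 + h6 + (2/τ₀)*h1 + (2/τ₀)*h4 + h7' + h8 + h9'
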